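/- Every finite distributive lattice with an even number of elements can be partitioned into two-element chains. -/

import Mathlib

namespace SandsAux

open Finset

variable {L : Type*} [DistribLattice L] [DecidableEq L]

/-- `C` is a valid collection of two-element chains exactly covering `t`. -/
def Good (C : Finset (L × L)) (t : Finset L) : Prop :=
  (∀ p ∈ C, p.1 < p.2) ∧ (∀ p ∈ C, p.1 ∈ t ∧ p.2 ∈ t) ∧
    ∀ x ∈ t, ∃! p : L × L, p ∈ C ∧ (x = p.1 ∨ x = p.2)

/-- `t` admits a partition into two-element chains. -/
def Matchable (t : Finset L) : Prop := ∃ C : Finset (L × L), Good C t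

lemma matchable_empty : Matchable (∅ : Finset L) := by
  refine ⟨∅, ?_, ?_, ?_⟩ <;> simp

lemma good_union {C₁ C₂ : Finset (L × L)} {t₁ t₂ : Finset L}
    (h1 : Good C₁ t₁) (h2 : Good C₂ t₂) (hd : Disjoint t₁ t₂) :
    Good (C₁ ∪ C₂) (t₁ ∪ t₂) := by
  obtain ⟨hlt1, hmem1, hcov1⟩ := h1
  obtain ⟨hlt2, hmem2, hcov2⟩ := h2
  refine ⟨?_, ?_, ?_⟩
  · intro p hp
    rcases mem_union.mp hp with h | h
    · exact hlt1 p h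
    · exact hlt2 p h
  · intro p hp
    rcases mem_union.mp hp with h | h
    · exact ⟨mem_union_left _ (hmem1 p h).1, mem_union_left _ (hmem1 p h).2⟩
    · exact ⟨mem_union_right _ (hmem2 p h).1, mem_union_right _ (hmem2 p h).2⟩
  · intro x hx
    rcases mem_union.mp hx with h | h
    · obtain ⟨p, ⟨hpC, hpx⟩, huniq⟩ := hcov1 x h
      refine ⟨p, ⟨mem_union_left _ hpC, hpx⟩, ?_⟩
      rintro q ⟨hqC, hqx⟩
      rcases mem_union.mp hqC with hq | hq
      · exact huniq q ⟨hq, hqx⟩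
      · exfalso
        have : x ∈ t₂ := by
          rcases hqx with rfl | rfl
          · exact (hmem2 q hq).1
          · exact (hmem2 q hq).2
        exact (Finset.disjoint_left.mp hd h) this
    · obtain ⟨p, ⟨hpC, hpx⟩, huniq⟩ := hcov2 x h
      refine ⟨p, ⟨mem_union_right _ hpC, hpx⟩, ?_⟩
      rintro q ⟨hqC, hqx⟩
      rcases mem_union.mp hqC with hq | hq
      · exfalso
        have : x ∈ t₁ := by
          rcases hqx with rfl | rfl
          · exact (hmem1 q hq).1
          · exact (hmem1 q hq).2
        exact (Finset.disjoint_left.mp hd this) h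
      · exact huniq q ⟨hq, hqx⟩

lemma matchable_union {t₁ t₂ : Finset L} (h1 : Matchable t₁) (h2 : Matchable t₂)
    (hd : Disjoint t₁ t₂) : Matchable (t₁ ∪ t₂) := by
  obtain ⟨C₁, hC₁⟩ := h1
  obtain ⟨C₂, hC₂⟩ := h2
  exact ⟨C₁ ∪ C₂, good_union hC₁ hC₂ hd⟩

lemma good_pair {x y : L} (hxy : x < y) : Good {(x, y)} ({x, y} : Finset L) := by
  refine ⟨?_, ?_, ?_⟩
  · intro p hp
    rw [mem_singleton] at hp
    subst hp
    exact hxy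
  · intro p hp
    rw [mem_singleton] at hp
    subst hp
    simp
  · intro z hz
    refine ⟨(x, y), ⟨mem_singleton_self _, ?_⟩, ?_⟩
    · rcases mem_insert.mp hz with rfl | hz
      · exact Or.inl rfl
      · exact Or.inr (mem_singleton.mp hz)
    · rintro q ⟨hq, -⟩
      exact mem_singleton.mp hq

lemma matchable_insert_pair {t : Finset L} {x y : L} (h : Matchable t) (hxy : x < y)
    (hx : x ∉ t) (hy : y ∉ t) : Matchable (insert x (insert y t)) := by
  have hd : Disjoint ({x, y} : Finset L) t := by
    rw [Finset.disjoint_left]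
    intro z hz
    rcases Finset.mem_insert.mp hz with rfl | hz'
    · exact fun c => hx c
    · rw [Finset.mem_singleton] at hz'
      subst hz'
      exact fun c => hy c
  have h2 := matchable_union ⟨{(x, y)}, good_pair hxy⟩ h hd
  rwa [show ({x, y} : Finset L) ∪ t = insert x (insert y t) by
    ext z; simp [or_assoc]] at h2

lemma good_erase {C : Finset (L × L)} {t : Finset L} (h : Good C t) {p : L × L}
    (hp : p ∈ C) : Good (C.erase p) ((t.erase p.1).erase p.2) := by
  obtain ⟨hlt, hmem, hcov⟩ := h
  have hp1 : p.1 ∈ t := (hmem p hp).1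
  have hp2 : p.2 ∈ t := (hmem p hp).2
  refine ⟨fun q hq => hlt q (mem_of_mem_erase hq), ?_, ?_⟩
  · intro q hq
    have hqC : q ∈ C := mem_of_mem_erase hq
    have hqp : q ≠ p := ne_of_mem_erase hq
    have h1 : q.1 ≠ p.1 := by
      intro he
      exact hqp ((hcov p.1 hp1).unique ⟨hqC, Or.inl he.symm⟩ ⟨hp, Or.inl rfl⟩)
    have h1' : q.1 ≠ p.2 := by
      intro he
      exact hqp ((hcov p.2 hp2).unique ⟨hqC, Or.inl he.symm⟩ ⟨hp, Or.inr rfl⟩)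
    have h2 : q.2 ≠ p.1 := by
      intro he
      exact hqp ((hcov p.1 hp1).unique ⟨hqC, Or.inr he.symm⟩ ⟨hp, Or.inl rfl⟩)
    have h2' : q.2 ≠ p.2 := by
      intro he
      exact hqp ((hcov p.2 hp2).unique ⟨hqC, Or.inr he.symm⟩ ⟨hp, Or.inr rfl⟩)
    exact ⟨mem_erase.mpr ⟨h1', mem_erase.mpr ⟨h1, (hmem q hqC).1⟩⟩,
      mem_erase.mpr ⟨h2', mem_erase.mpr ⟨h2, (hmem q hqC).2⟩⟩⟩
  · intro x hx
    have hx2 : x ≠ p.2 := (mem_erase.mp hx).1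
    have hx1 : x ≠ p.1 := (mem_erase.mp (mem_erase.mp hx).2).1
    have hxt : x ∈ t := (mem_erase.mp (mem_erase.mp hx).2).2
    obtain ⟨q, ⟨hqC, hqx⟩, huniq⟩ := hcov x hxt
    have hqp : q ≠ p := by
      rintro rfl
      rcases hqx with h | h
      · exact hx1 h
      · exact hx2 h
    refine ⟨q, ⟨mem_erase.mpr ⟨hqp, hqC⟩, hqx⟩, ?_⟩
    rintro r ⟨hrC, hrx⟩
    exact huniq r ⟨mem_of_mem_erase hrC, hrx⟩

/-- From a matching of `t` and `m ∈ t`, remove `m`'s pair to get a matching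
avoiding both `m` and its partner `u`. -/
lemma steal {t : Finset L} (h : Matchable t) {m : L} (hm : m ∈ t) :
    ∃ u ∈ t, u ≠ m ∧ Matchable ((t.erase m).erase u) := by
  obtain ⟨C, hC⟩ := h
  obtain ⟨hlt, hmem, hcov⟩ := hC
  obtain ⟨p, ⟨hpC, hpm⟩, -⟩ := hcov m hm
  have hne : p.1 ≠ p.2 := (hlt p hpC).ne
  rcases hpm with h1 | h2
  · refine ⟨p.2, (hmem p hpC).2, by rw [← h1] at hne; exact fun he => hne he.symm, ?_⟩
    have := good_erase ⟨hlt, hmem, hcov⟩ hpC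
    rw [← h1] at this
    exact ⟨C.erase p, this⟩
  · refine ⟨p.1, (hmem p hpC).1, by rw [← h2] at hne; exact hne, ?_⟩
    have := good_erase ⟨hlt, hmem, hcov⟩ hpC
    rw [← h2, Finset.erase_right_comm] at this
    exact ⟨C.erase p, this⟩

end SandsAux

open Finset SandsAux in
private theorem sands_key {L : Type*} [DistribLattice L] [DecidableEq L] :
    ∀ (n : ℕ) (s : Finset L), s.card = n →
    (∀ x ∈ s, ∀ y ∈ s, x ⊔ y ∈ s) → (∀ x ∈ s, ∀ y ∈ s, x ⊓ y ∈ s) →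
    (Even s.card → Matchable s) ∧
      (¬ Even s.card → ∀ m ∈ s, Matchable (s.erase m)) := by
  intro n
  induction n using Nat.strong_induction_on with
  | _ n IH =>
  intro s hcard hsup hinf
  classical
  rcases s.eq_empty_or_nonempty with rfl | hs
  · exact ⟨fun _ => matchable_empty, fun h => absurd (by simp) h⟩
  -- bottom element b of s
  have hbmem : s.inf' hs id ∈ s := by
    exact Finset.inf'_mem (s : Set L) (fun x hx y hy => hinf x hx y hy) s hs id
      (fun i hi => hi)
  set b := s.inf' hs id with hbdef
  have hble : ∀ x ∈ s, b ≤ x := fun x hx => inf'_le id hx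
  by_cases hcard1 : s.card = 1
  · obtain ⟨z, hz⟩ := card_eq_one.mp hcard1
    constructor
    · intro he
      rw [hcard1] at he
      exact absurd he (by decide)
    · intro _ m hm
      subst hz
      rw [mem_singleton.mp hm]
      simpa using matchable_empty
  -- the atom a : minimal element of s.erase b
  have hscard2 : 2 ≤ s.card := by
    have := Finset.card_pos.mpr hs
    omega
  have hebne : (s.erase b).Nonempty := by
    rw [← Finset.card_pos, card_erase_of_mem hbmem]
    omega
  obtain ⟨a, haeb, hamin'⟩ := Finset.exists_minimal hebne
  have hamin : ∀ x ∈ s.erase b, ¬ x < a := fun x hx hlt => hlt.not_ge (hamin' hx hlt.le)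
  have has : a ∈ s := mem_of_mem_erase haeb
  have hab : a ≠ b := (mem_erase.mp haeb).1
  have hba : b < a := lt_of_le_of_ne (hble a has) (Ne.symm hab)
  -- a is join-prime within s
  have hprime : ∀ x ∈ s, a ≤ x ∨ a ⊓ x = b := by
    intro x hx
    by_cases hax : a ≤ x
    · exact Or.inl hax
    · right
      have h1 : a ⊓ x ∈ s := hinf a has x hx
      have h2 : a ⊓ x < a := lt_of_le_of_ne inf_le_left (fun he => hax (he ▸ inf_le_right))
      by_contra hne
      exact hamin (a ⊓ x) (mem_erase.mpr ⟨hne, h1⟩) h2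
  have hprimesup : ∀ x ∈ s, ∀ y ∈ s, a ≤ x ⊔ y → a ≤ x ∨ a ≤ y := by
    intro x hx y hy hxy
    rcases hprime x hx with h | h
    · exact Or.inl h
    rcases hprime y hy with h' | h'
    · exact Or.inr h'
    exfalso
    have : a = b := by
      have : a = a ⊓ (x ⊔ y) := (inf_eq_left.mpr hxy).symm
      rw [inf_sup_left, h, h', sup_idem] at this
      exact this
    exact hab this
  -- the split
  set F := s.filter (fun x => a ≤ x) with hFdef
  set I := s.filter (fun x => ¬ a ≤ x) with hIdef
  have hIFunion : F ∪ I = s := filter_union_filter_not_eq (p := fun x => a ≤ x) s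
  have hIFdisj : Disjoint F I := disjoint_filter_filter_not s s _
  have hcards : F.card + I.card = s.card := card_filter_add_card_filter_not _
  have haF : a ∈ F := mem_filter.mpr ⟨has, le_refl a⟩
  have hbI : b ∈ I := mem_filter.mpr ⟨hbmem, hba.not_ge⟩
  have hIsub : I ⊆ s := filter_subset _ _
  have hFsub : F ⊆ s := filter_subset _ _
  have hIne : I.Nonempty := ⟨b, hbI⟩
  have hFne : F.Nonempty := ⟨a, haF⟩
  have hIcard : I.card < s.card := by
    have := Finset.card_pos.mpr hFne
    omega
  have hFcard : F.card < s.card := by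
    have := Finset.card_pos.mpr hIne
    omega
  -- closures
  have hsupI : ∀ x ∈ I, ∀ y ∈ I, x ⊔ y ∈ I := by
    intro x hx y hy
    obtain ⟨hxs, hxa⟩ := mem_filter.mp hx
    obtain ⟨hys, hya⟩ := mem_filter.mp hy
    refine mem_filter.mpr ⟨hsup x hxs y hys, ?_⟩
    intro hle
    rcases hprimesup x hxs y hys hle with h | h
    · exact hxa h
    · exact hya h
  have hinfI : ∀ x ∈ I, ∀ y ∈ I, x ⊓ y ∈ I := by
    intro x hx y hy
    obtain ⟨hxs, hxa⟩ := mem_filter.mp hx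
    obtain ⟨hys, -⟩ := mem_filter.mp hy
    exact mem_filter.mpr ⟨hinf x hxs y hys, fun hle => hxa (hle.trans inf_le_left)⟩
  have hsupF : ∀ x ∈ F, ∀ y ∈ F, x ⊔ y ∈ F := by
    intro x hx y hy
    obtain ⟨hxs, hxa⟩ := mem_filter.mp hx
    obtain ⟨hys, -⟩ := mem_filter.mp hy
    exact mem_filter.mpr ⟨hsup x hxs y hys, hxa.trans le_sup_left⟩
  have hinfF : ∀ x ∈ F, ∀ y ∈ F, x ⊓ y ∈ F := by
    intro x hx y hy
    obtain ⟨hxs, hxa⟩ := mem_filter.mp hx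
    obtain ⟨hys, hya⟩ := mem_filter.mp hy
    exact mem_filter.mpr ⟨hinf x hxs y hys, le_inf hxa hya⟩
  -- top element c of I
  have hcmem : I.sup' hIne id ∈ I :=
    Finset.sup'_mem (I : Set L) (fun x hx y hy => hsupI x hx y hy) I hIne id
      (fun i hi => hi)
  set c := I.sup' hIne id with hcdef
  have hlec : ∀ x ∈ I, x ≤ c := fun x hx => le_sup' id hx
  have hnac : ¬ a ≤ c := (mem_filter.mp hcmem).2
  -- induction hypotheses for I and F
  have IHI := IH I.card (hcard ▸ hIcard) I rfl hsupI hinfI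
  have IHF := IH F.card (hcard ▸ hFcard) F rfl hsupF hinfF
  -- parity facts (in terms of card % 2)
  constructor
  · -- Even case : partition all of s
    intro hE
    by_cases hIe : Even I.card
    · have hFe : Even F.card := by
        rw [Nat.even_iff] at hE hIe ⊢
        omega
      have h1 := IHI.1 hIe
      have h2 := IHF.1 hFe
      have := matchable_union h2 h1 hIFdisj
      rwa [hIFunion] at this
    · have hFo : ¬ Even F.card := by
        rw [Nat.even_iff] at hE ⊢
        rw [Nat.even_iff] at hIe
        omega
      have h1 := IHI.2 hIe b hbI
      have h2 := IHF.2 hFo a haF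
      have hdisj : Disjoint (I.erase b) (F.erase a) :=
        Finset.disjoint_of_subset_left (erase_subset _ _)
          (Finset.disjoint_of_subset_right (erase_subset _ _) hIFdisj.symm)
      have hun := matchable_union h1 h2 hdisj
      have hbni : b ∉ (I.erase b) ∪ (F.erase a) := by
        simp only [mem_union, mem_erase]
        rintro (⟨hne, -⟩ | ⟨-, hmem⟩)
        · exact hne rfl
        · exact (Finset.disjoint_right.mp hIFdisj hbI) hmem
      have hani : a ∉ (I.erase b) ∪ (F.erase a) := by
        simp only [mem_union, mem_erase]
        rintro (⟨-, hmem⟩ | ⟨hne, -⟩)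
        · exact (Finset.disjoint_left.mp hIFdisj haF) hmem
        · exact hne rfl
      have := matchable_insert_pair hun hba
        (by intro h; exact hbni h) (by intro h; exact hani h)
      have hset : insert b (insert a ((I.erase b) ∪ (F.erase a))) = s := by
        ext x
        simp only [mem_insert, mem_union, mem_erase]
        constructor
        · rintro (rfl | rfl | ⟨-, h⟩ | ⟨-, h⟩)
          · exact hbmem
          · exact has
          · exact hIsub h
          · exact hFsub h
        · intro hx
          have : x ∈ F ∪ I := by rw [hIFunion]; exact hx
          rcases mem_union.mp this with h | h
          · by_cases hxa : x = a
            · exact Or.inr (Or.inl hxa)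
            · exact Or.inr (Or.inr (Or.inr ⟨hxa, h⟩))
          · by_cases hxb : x = b
            · exact Or.inl hxb
            · exact Or.inr (Or.inr (Or.inl ⟨hxb, h⟩))
      rwa [hset] at this
  · -- Odd case : partition s minus any m
    intro hO m hm
    have hmIF : m ∈ F ∪ I := by rw [hIFunion]; exact hm
    rcases mem_union.mp hmIF with hmF | hmI
    · -- m ∈ F
      by_cases hFe : Even F.card
      · -- steal from a matching of F, pair the partner u with u ⊓ c
        obtain ⟨u, huF, hum, hMrem⟩ := steal (IHF.1 hFe) hmF
        have hIo : ¬ Even I.card := by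
          rw [Nat.even_iff] at hFe hO ⊢
          omega
        have hus : u ∈ s := hFsub huF
        have hau : a ≤ u := (mem_filter.mp huF).2
        have hucI : u ⊓ c ∈ I := by
          refine mem_filter.mpr ⟨hinf u hus c (hIsub hcmem), ?_⟩
          intro hle
          exact hnac (hle.trans inf_le_right)
        have huclt : u ⊓ c < u := by
          refine lt_of_le_of_ne inf_le_left ?_
          intro he
          have : u ≤ c := he ▸ inf_le_right
          exact hnac (hau.trans this)
        have hMI := IHI.2 hIo (u ⊓ c) hucI
        have hdisj : Disjoint (I.erase (u ⊓ c)) ((F.erase m).erase u) := by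
          refine Finset.disjoint_of_subset_left (erase_subset _ _) ?_
          exact Finset.disjoint_of_subset_right
            ((erase_subset _ _).trans (erase_subset _ _)) hIFdisj.symm
        have hun := matchable_union hMI hMrem hdisj
        have hucni : u ⊓ c ∉ (I.erase (u ⊓ c)) ∪ ((F.erase m).erase u) := by
          simp only [mem_union, mem_erase]
          rintro (⟨hne, -⟩ | ⟨-, -, hmem⟩)
          · exact hne rfl
          · exact (Finset.disjoint_right.mp hIFdisj hucI) hmem
        have huni : u ∉ (I.erase (u ⊓ c)) ∪ ((F.erase m).erase u) := by
          simp only [mem_union, mem_erase]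
          rintro (⟨-, hmem⟩ | ⟨hne, -, -⟩)
          · exact (Finset.disjoint_left.mp hIFdisj huF) hmem
          · exact hne rfl
        have hres := matchable_insert_pair hun huclt hucni huni
        have hset : insert (u ⊓ c) (insert u ((I.erase (u ⊓ c)) ∪ ((F.erase m).erase u)))
            = s.erase m := by
          ext x
          simp only [mem_insert, mem_union, mem_erase]
          constructor
          · rintro (rfl | rfl | ⟨-, h⟩ | ⟨-, hxm2, h⟩)
            · refine ⟨?_, hIsub hucI⟩
              intro he
              exact (Finset.disjoint_right.mp hIFdisj (he ▸ hucI)) hmF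
            · exact ⟨hum, hus⟩
            · refine ⟨?_, hIsub h⟩
              intro he
              exact (Finset.disjoint_right.mp hIFdisj (he ▸ h)) hmF
            · exact ⟨hxm2, hFsub h⟩
          · rintro ⟨hxm, hxs⟩
            have : x ∈ F ∪ I := by rw [hIFunion]; exact hxs
            rcases mem_union.mp this with h | h
            · by_cases hxu : x = u
              · exact Or.inr (Or.inl hxu)
              · exact Or.inr (Or.inr (Or.inr ⟨hxu, hxm, h⟩))
            · by_cases hxuc : x = u ⊓ c
              · exact Or.inl hxuc
              · exact Or.inr (Or.inr (Or.inl ⟨hxuc, h⟩))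
        rwa [hset] at hres
      · -- F odd : recurse on F minus m, plus an even matching of I
        have hIe : Even I.card := by
          rw [Nat.even_iff] at hFe hO ⊢
          omega
        have h1 := IHF.2 hFe m hmF
        have h2 := IHI.1 hIe
        have hdisj : Disjoint (F.erase m) I :=
          Finset.disjoint_of_subset_left (erase_subset _ _) hIFdisj
        have hun := matchable_union h1 h2 hdisj
        have hset : (F.erase m) ∪ I = s.erase m := by
          ext x
          simp only [mem_union, mem_erase]
          constructor
          · rintro (⟨hne, h⟩ | h)
            · exact ⟨hne, hFsub h⟩
            · refine ⟨?_, hIsub h⟩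
              intro he
              exact (Finset.disjoint_right.mp hIFdisj (he ▸ h)) hmF
          · rintro ⟨hxm, hxs⟩
            have : x ∈ F ∪ I := by rw [hIFunion]; exact hxs
            rcases mem_union.mp this with h | h
            · exact Or.inl ⟨hxm, h⟩
            · exact Or.inr h
        rwa [hset] at hun
    · -- m ∈ I
      by_cases hIe : Even I.card
      · -- steal from a matching of I, pair the partner u with u ⊔ a
        obtain ⟨u, huI, hum, hMrem⟩ := steal (IHI.1 hIe) hmI
        have hFo : ¬ Even F.card := by
          rw [Nat.even_iff] at hIe hO ⊢
          omega
        have hus : u ∈ s := hIsub huI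
        have hnau : ¬ a ≤ u := (mem_filter.mp huI).2
        have huaF : u ⊔ a ∈ F := mem_filter.mpr ⟨hsup u hus a has, le_sup_right⟩
        have hualt : u < u ⊔ a := by
          refine lt_of_le_of_ne le_sup_left ?_
          intro he
          exact hnau (he ▸ le_sup_right)
        have hMF := IHF.2 hFo (u ⊔ a) huaF
        have hdisj : Disjoint ((I.erase m).erase u) (F.erase (u ⊔ a)) := by
          refine Finset.disjoint_of_subset_left
            ((erase_subset _ _).trans (erase_subset _ _)) ?_
          exact Finset.disjoint_of_subset_right (erase_subset _ _) hIFdisj.symm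
        have hun := matchable_union hMrem hMF hdisj
        have huni : u ∉ ((I.erase m).erase u) ∪ (F.erase (u ⊔ a)) := by
          simp only [mem_union, mem_erase]
          rintro (⟨hne, -, -⟩ | ⟨-, hmem⟩)
          · exact hne rfl
          · exact (Finset.disjoint_left.mp hIFdisj hmem) huI
        have huani : u ⊔ a ∉ ((I.erase m).erase u) ∪ (F.erase (u ⊔ a)) := by
          simp only [mem_union, mem_erase]
          rintro (⟨-, -, hmem⟩ | ⟨hne, -⟩)
          · exact (Finset.disjoint_left.mp hIFdisj huaF) hmem
          · exact hne rfl
        have hres := matchable_insert_pair hun hualt huni huani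
        have hset : insert u (insert (u ⊔ a) (((I.erase m).erase u) ∪ (F.erase (u ⊔ a))))
            = s.erase m := by
          ext x
          simp only [mem_insert, mem_union, mem_erase]
          constructor
          · rintro (rfl | rfl | ⟨-, hxm2, h⟩ | ⟨-, h⟩)
            · exact ⟨hum, hus⟩
            · refine ⟨?_, hFsub huaF⟩
              intro he
              exact (Finset.disjoint_left.mp hIFdisj (he ▸ huaF)) hmI
            · exact ⟨hxm2, hIsub h⟩
            · refine ⟨?_, hFsub h⟩
              intro he
              exact (Finset.disjoint_left.mp hIFdisj (he ▸ h)) hmI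
          · rintro ⟨hxm, hxs⟩
            have : x ∈ F ∪ I := by rw [hIFunion]; exact hxs
            rcases mem_union.mp this with h | h
            · by_cases hxua : x = u ⊔ a
              · exact Or.inr (Or.inl hxua)
              · exact Or.inr (Or.inr (Or.inr ⟨hxua, h⟩))
            · by_cases hxu : x = u
              · exact Or.inl hxu
              · exact Or.inr (Or.inr (Or.inl ⟨hxu, hxm, h⟩))
        rwa [hset] at hres
      · -- I odd : recurse on I minus m, plus an even matching of F
        have hFe : Even F.card := by
          rw [Nat.even_iff] at hIe hO ⊢
          omega
        have h1 := IHI.2 hIe m hmI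
        have h2 := IHF.1 hFe
        have hdisj : Disjoint (I.erase m) F :=
          Finset.disjoint_of_subset_left (erase_subset _ _) hIFdisj.symm
        have hun := matchable_union h1 h2 hdisj
        have hset : (I.erase m) ∪ F = s.erase m := by
          ext x
          simp only [mem_union, mem_erase]
          constructor
          · rintro (⟨hne, h⟩ | h)
            · exact ⟨hne, hIsub h⟩
            · refine ⟨?_, hFsub h⟩
              intro he
              exact (Finset.disjoint_left.mp hIFdisj (he ▸ h)) hmI
          · rintro ⟨hxm, hxs⟩
            have : x ∈ F ∪ I := by rw [hIFunion]; exact hxs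
            rcases mem_union.mp this with h | h
            · exact Or.inr h
            · exact Or.inl ⟨hxm, h⟩
        rwa [hset] at hun

/-- Sands' Matching Theorem: every finite distributive lattice with an even
number of elements can be partitioned into two-element chains. -/
theorem sands_matching (L : Type*) [DistribLattice L] [Fintype L]
    (h : Even (Fintype.card L)) :
    ∃ C : Finset (L × L), (∀ p ∈ C, p.1 < p.2) ∧
      ∀ x : L, ∃! p : L × L, p ∈ C ∧ (x = p.1 ∨ x = p.2) := by
  classical
  have hkey := sands_key (L := L) (Finset.univ.card) Finset.univ rfl
    (by intros; exact Finset.mem_univ _) (by intros; exact Finset.mem_univ _)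
  have hM : SandsAux.Matchable (Finset.univ : Finset L) := by
    refine hkey.1 ?_
    rwa [Finset.card_univ]
  obtain ⟨C, h1, _, h3⟩ := hM
  exact ⟨C, h1, fun x => h3 x (Finset.mem_univ x)⟩
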